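/- For a nonempty compact set A in ℝⁿ and a linear functional v, the value max_{f ∈ argmax_{g∈A} v·g} u·f is equal to the corresponding value for the convex hull of A: max over v-maximizers of co(A) of u·f equals max over v-maximizers of A of u·f. -/

import Mathlib

/-- The Strotz value of a menu equals that of its convex hull:
`max_{f ∈ argmax_{g ∈ co(A)} v·g} u·f = max_{f ∈ argmax_{g ∈ A} v·g} u·f`. -/
theorem stmt_2 {n : ℕ} (A : Set (Fin n → ℝ)) (hne : A.Nonempty) (hA : IsCompact A)
    (u v : Fin n → ℝ) :
    sSup ((fun f => ∑ i, u i * f i) ''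
        {f ∈ convexHull ℝ A | ∀ g ∈ convexHull ℝ A, ∑ i, v i * g i ≤ ∑ i, v i * f i})
      = sSup ((fun f => ∑ i, u i * f i) ''
        {f ∈ A | ∀ g ∈ A, ∑ i, v i * g i ≤ ∑ i, v i * f i}) := by
  classical
  set L : (Fin n → ℝ) → ℝ := fun f => ∑ i, u i * f i with hLdef
  set V : (Fin n → ℝ) → ℝ := fun f => ∑ i, v i * f i with hVdef
  have hLlin : IsLinearMap ℝ L := by
    constructor
    · intro x y
      simp only [hLdef, Pi.add_apply, mul_add, Finset.sum_add_distrib]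
    · intro c x
      simp only [hLdef, Pi.smul_apply, smul_eq_mul, Finset.mul_sum]
      exact Finset.sum_congr rfl fun i _ => by ring
  have hVlin : IsLinearMap ℝ V := by
    constructor
    · intro x y
      simp only [hVdef, Pi.add_apply, mul_add, Finset.sum_add_distrib]
    · intro c x
      simp only [hVdef, Pi.smul_apply, smul_eq_mul, Finset.mul_sum]
      exact Finset.sum_congr rfl fun i _ => by ring
  have hLcont : Continuous L := continuous_finset_sum _ fun i _ =>
    continuous_const.mul (continuous_apply i)
  have hVcont : Continuous V := continuous_finset_sum _ fun i _ =>
    continuous_const.mul (continuous_apply i)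
  have hsub : A ⊆ convexHull ℝ A := subset_convexHull ℝ A
  set S₀ : Set (Fin n → ℝ) := {f ∈ A | ∀ g ∈ A, V g ≤ V f} with hS₀def
  set S₁ : Set (Fin n → ℝ) := {f ∈ convexHull ℝ A | ∀ g ∈ convexHull ℝ A, V g ≤ V f} with hS₁def
  -- S₀ is nonempty
  obtain ⟨x₀, hx₀A, hx₀⟩ := hA.exists_isMaxOn hne hVcont.continuousOn
  have hS₀ne : S₀.Nonempty := ⟨x₀, hx₀A, hx₀⟩
  -- S₀ ⊆ S₁
  have hS01 : S₀ ⊆ S₁ := by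
    rintro f ⟨hfA, hf⟩
    refine ⟨hsub hfA, fun g hg => ?_⟩
    have hconv : Convex ℝ {w | V w ≤ V f} := convex_halfSpace_le hVlin (V f)
    exact convexHull_min (fun a ha => hf a ha) hconv hg
  have hS₁ne : S₁.Nonempty := hS₀ne.mono hS01
  -- bddAbove of L '' A
  have hbddA : BddAbove (L '' A) := (hA.image hLcont).bddAbove
  have hbdd₀ : BddAbove (L '' S₀) := hbddA.mono (Set.image_mono fun f hf => hf.1)
  -- on the hull, L is bounded by sSup (L '' A)
  have hLhull : ∀ x ∈ convexHull ℝ A, L x ≤ sSup (L '' A) := by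
    intro x hx
    have hconv : Convex ℝ {w | L w ≤ sSup (L '' A)} := convex_halfSpace_le hLlin _
    exact convexHull_min (fun a ha => le_csSup hbddA ⟨a, ha, rfl⟩) hconv hx
  have hbdd₁ : BddAbove (L '' S₁) := by
    refine ⟨sSup (L '' A), ?_⟩
    rintro y ⟨f, hf, rfl⟩
    exact hLhull f hf.1
  apply le_antisymm
  · -- ≤ : decompose each maximizer of the hull as a convex combination of maximizers of A
    apply csSup_le (hS₁ne.image L)
    rintro y ⟨f, ⟨hfco, hfmax⟩, rfl⟩
    rw [convexHull_eq] at hfco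
    obtain ⟨ι, t, w, z, hw0, hw1, hz, hfz⟩ := hfco
    have hfz' : f = ∑ i ∈ t, w i • z i := by
      rw [← hfz, Finset.centerMass_eq_of_sum_1 _ _ hw1]
    set hV : (Fin n → ℝ) →ₗ[ℝ] ℝ := hVlin.mk' V with hVmk
    set hL : (Fin n → ℝ) →ₗ[ℝ] ℝ := hLlin.mk' L with hLmk
    have hVsum : V f = ∑ i ∈ t, w i * V (z i) := by
      have : hV f = ∑ i ∈ t, w i • hV (z i) := by
        rw [hfz', map_sum]
        exact Finset.sum_congr rfl fun i _ => map_smul hV _ _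
      simpa [hVmk, IsLinearMap.mk'_apply, smul_eq_mul] using this
    have hLsum : L f = ∑ i ∈ t, w i * L (z i) := by
      have : hL f = ∑ i ∈ t, w i • hL (z i) := by
        rw [hfz', map_sum]
        exact Finset.sum_congr rfl fun i _ => map_smul hL _ _
      simpa [hLmk, IsLinearMap.mk'_apply, smul_eq_mul] using this
    have hVle : ∀ i ∈ t, V (z i) ≤ V f := fun i hi => hfmax (z i) (hsub (hz i hi))
    -- positive-weight atoms achieve the max
    have hkey : ∀ i ∈ t, w i ≠ 0 → V (z i) = V f := by
      intro i hi hwi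
      by_contra hne'
      have hlt : V (z i) < V f := lt_of_le_of_ne (hVle i hi) hne'
      have hwpos : 0 < w i := lt_of_le_of_ne (hw0 i hi) (Ne.symm hwi)
      have : ∑ j ∈ t, w j * V (z j) < ∑ j ∈ t, w j * V f := by
        apply Finset.sum_lt_sum
        · intro j hj
          exact mul_le_mul_of_nonneg_left (hVle j hj) (hw0 j hj)
        · exact ⟨i, hi, by nlinarith⟩
      rw [← Finset.sum_mul, hw1, one_mul, ← hVsum] at this
      exact lt_irrefl _ this
    -- conclude
    have hterm : ∀ i ∈ t, w i * L (z i) ≤ w i * sSup (L '' S₀) := by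
      intro i hi
      rcases eq_or_ne (w i) 0 with h0 | h0
      · simp [h0]
      · apply mul_le_mul_of_nonneg_left _ (hw0 i hi)
        apply le_csSup hbdd₀
        refine ⟨z i, ⟨hz i hi, fun g hg => ?_⟩, rfl⟩
        rw [hkey i hi h0]
        exact hfmax g (hsub hg)
    calc L f = ∑ i ∈ t, w i * L (z i) := hLsum
      _ ≤ ∑ i ∈ t, w i * sSup (L '' S₀) := Finset.sum_le_sum hterm
      _ = sSup (L '' S₀) := by rw [← Finset.sum_mul, hw1, one_mul]
  · exact csSup_le_csSup hbdd₁ (hS₀ne.image L) (Set.image_mono hS01)
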